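/- Let R be an LM-system. Then f(s1,…,sn) →*_R f(t1,…,tn) if and only if si →*_R ti for every i ∈ {1,…,n}. In particular, any rewrite sequence between two terms with the same root symbol contains no root rewrite step. -/

import Mathlib

/-! Basic first-order terms, positions, substitutions and rewriting. -/

inductive Term (F : Type) : Type
  | var : Nat → Term F
  | app : F → List (Term F) → Term F

namespace Term

def subst {F : Type} (σ : Nat → Term F) : Term F → Term F
  | var n => σ n
  | app f ts => app f (ts.attach.map fun ⟨t, _⟩ => t.subst σ)

def root {F : Type} : Term F → Option F
  | var _ => none
  | app f _ => some f

def label {F : Type} : Term F → F ⊕ Nat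
  | var n => Sum.inr n
  | app f _ => Sum.inl f

def IsVar {F : Type} : Term F → Prop
  | var _ => True
  | app _ _ => False

def varsL {F : Type} : Term F → List Nat
  | var n => [n]
  | app _ ts => (ts.attach.map fun ⟨t, _⟩ => t.varsL).flatten

end Term

abbrev Rule (F : Type) := Term F × Term F
abbrev TRS (F : Type) := Set (Rule F)

/-- `SubtermAt t p u` : the subterm of `t` at position `p` is `u`. -/
inductive SubtermAt {F : Type} : Term F → List Nat → Term F → Prop
  | here (t : Term F) : SubtermAt t [] t
  | there {f : F} {ts : List (Term F)} {i : Nat} {u : Term F} {p : List Nat} {v : Term F} :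
      ts[i]? = some u → SubtermAt u p v → SubtermAt (Term.app f ts) (i :: p) v

/-- `ReplaceAt t p v t'` : replacing the subterm of `t` at position `p` by `v` yields `t'`. -/
inductive ReplaceAt {F : Type} : Term F → List Nat → Term F → Term F → Prop
  | here (t u : Term F) : ReplaceAt t [] u u
  | there {f : F} {ts : List (Term F)} {i : Nat} {u : Term F} {p : List Nat} {v w : Term F} :
      ts[i]? = some u → ReplaceAt u p v w →
      ReplaceAt (Term.app f ts) (i :: p) v (Term.app f (ts.set i w))

variable {F : Type}

/-- One rewrite step using the given rule (at some position, with some substitution). -/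
def RuleStep (ρ : Rule F) (s t : Term F) : Prop :=
  ∃ (σ : Nat → Term F) (p : List Nat),
    SubtermAt s p (ρ.1.subst σ) ∧ ReplaceAt s p (ρ.2.subst σ) t

def OneStep (R : TRS F) (s t : Term F) : Prop := ∃ ρ ∈ R, RuleStep ρ s t

/-- A rewrite step at the root position. -/
def RootStep (R : TRS F) (s t : Term F) : Prop :=
  ∃ ρ ∈ R, ∃ σ : Nat → Term F, s = ρ.1.subst σ ∧ t = ρ.2.subst σ

def StarRW (R : TRS F) : Term F → Term F → Prop := Relation.ReflTransGen (OneStep R)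
def Plus (R : TRS F) : Term F → Term F → Prop := Relation.TransGen (OneStep R)
/-- Convertibility (the congruence / equational theory generated by `R`). -/
def Conv (R : TRS F) : Term F → Term F → Prop := Relation.EqvGen (OneStep R)
def Joinable (R : TRS F) (s t : Term F) : Prop := ∃ u, StarRW R s u ∧ StarRW R t u
def NormalForm (R : TRS F) (t : Term F) : Prop := ∀ u, ¬ OneStep R t u
/-- `t` is the `R`-normal form of `s`. -/
def NFof (R : TRS F) (s t : Term F) : Prop := StarRW R s t ∧ NormalForm R t
def Terminating (R : TRS F) : Prop := WellFounded (fun a b : Term F => OneStep R b a)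
def Confluent (R : TRS F) : Prop := ∀ s t u, StarRW R s t → StarRW R s u → Joinable R t u
def Convergent (R : TRS F) : Prop := Confluent R ∧ Terminating R

/-- every proper subterm is irreducible -/
def EpsIrreducible (R : TRS F) (t : Term F) : Prop :=
  ∀ p u, SubtermAt t p u → p ≠ [] → NormalForm R u

def InnermostRedex (R : TRS F) (t : Term F) : Prop :=
  EpsIrreducible R t ∧ ¬ NormalForm R t

/-- Forward-closed, via the one-step-to-normal-form characterization. -/
def FCclosed (R : TRS F) : Prop :=
  ∀ t, InnermostRedex R t → ∀ u, NFof R t u → OneStep R t u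

def Unifies (σ : Nat → Term F) (s t : Term F) : Prop := s.subst σ = t.subst σ

def IsMGU (σ : Nat → Term F) (s t : Term F) : Prop :=
  Unifies σ s t ∧ ∀ τ, Unifies τ s t → ∃ δ, ∀ x, τ x = (σ x).subst δ

def IsRenaming (ρ : Nat → Term F) : Prop :=
  ∃ f : Nat → Nat, Function.Injective f ∧ ∀ n, ρ n = Term.var (f n)

/-- Redundancy criterion for an oriented equation `e` whose right-hand side is
reachable from its left-hand side: some proper subterm of the lhs is reducible. -/
def Redundant (R : TRS F) (e : Rule F) : Prop :=
  ∃ p u, p ≠ ([] : List Nat) ∧ SubtermAt e.1 p u ∧ ¬ NormalForm R u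

/-- `R₁ ↝ R₂`: forward overlaps of rules of `R₂` (renamed apart) into
right-hand sides of rules of `R₁`, at non-variable positions, via an mgu. -/
def FStep (R₁ R₂ : TRS F) : TRS F :=
  { e | ∃ (l₁ r₁ l₂ r₂ : Term F) (ρ : Nat → Term F) (p : List Nat) (u : Term F)
          (σ : Nat → Term F) (r₁' : Term F),
      (l₁, r₁) ∈ R₁ ∧ (l₂, r₂) ∈ R₂ ∧ IsRenaming ρ ∧
      SubtermAt r₁ p u ∧ ¬ u.IsVar ∧ IsMGU σ u (l₂.subst ρ) ∧
      ReplaceAt r₁ p (r₂.subst ρ) r₁' ∧ e = (l₁.subst σ, r₁'.subst σ) }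

def FCiter (R : TRS F) : Nat → TRS F
  | 0 => R
  | k + 1 => FCiter R k ∪ { e | e ∈ FStep (FCiter R k) R ∧ ¬ Redundant (FCiter R k) e }

def FCinf (R : TRS F) : TRS F := ⋃ k, FCiter R k

/-- Forward-closed, via the forward-closure construction: `FC(R) = R`. -/
def ForwardClosedFC (R : TRS F) : Prop := FCinf R = R

/-- `RHS(R)`: `R` together with the conclusions of right-hand-side critical
pair inferences (second rule renamed apart). -/
def RHSset (R : TRS F) : TRS F :=
  R ∪ { e | ∃ (s t u₀ v₀ : Term F) (ρ σ : Nat → Term F), (s, t) ∈ R ∧ (u₀, v₀) ∈ R ∧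
        IsRenaming ρ ∧ IsMGU σ t (v₀.subst ρ) ∧
        s.subst σ ≠ (u₀.subst ρ).subst σ ∧ e = (s.subst σ, (u₀.subst ρ).subst σ) }

/-- the (unordered) pairs of root symbols of two equations coincide -/
def RootPairSimilar (e₁ e₂ : Rule F) : Prop :=
  (e₁.1.root = e₂.1.root ∧ e₁.2.root = e₂.2.root) ∨
  (e₁.1.root = e₂.2.root ∧ e₁.2.root = e₂.1.root)

def QuasiDet (E : TRS F) : Prop :=
  (∀ e ∈ E, ¬ e.1.IsVar ∧ ¬ e.2.IsVar) ∧
  (∀ e ∈ E, e.1.root ≠ e.2.root) ∧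
  (∀ e₁ ∈ E, ∀ e₂ ∈ E, e₁ ≠ e₂ → ¬ RootPairSimilar e₁ e₂)

def HasRootPairRepetition (E : TRS F) : Prop :=
  ∃ e₁ ∈ E, ∃ e₂ ∈ E, e₁ ≠ e₂ ∧ RootPairSimilar e₁ e₂

def VarPreserving (R : TRS F) : Prop :=
  ∀ e ∈ R, ∀ n, n ∈ Term.varsL e.1 ↔ n ∈ Term.varsL e.2

def RightReduced (R : TRS F) : Prop := ∀ e ∈ R, NormalForm R e.2

def AlmostLeftReduced (R : TRS F) : Prop :=
  ¬ ∃ (l₁ r₁ l₂ r₂ : Term F) (p : List Nat) (u : Term F) (σ : Nat → Term F),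
      (l₁, r₁) ∈ R ∧ (l₂, r₂) ∈ R ∧ p ≠ [] ∧ SubtermAt l₁ p u ∧ u = l₂.subst σ

def NonSubtermCollapsing (R : TRS F) : Prop :=
  ¬ ∃ (t u : Term F) (p : List Nat), p ≠ [] ∧ SubtermAt u p t ∧ Conv R t u

structure LMSystem (R : TRS F) : Prop where
  convergent : Convergent R
  almostLeftReduced : AlmostLeftReduced R
  rightReduced : RightReduced R
  nonCollapsing : NonSubtermCollapsing R
  forwardClosed : FCclosed R
  quasiDet : QuasiDet (RHSset R)

/-- the symbol (function symbol or variable) of a term at a position, if defined -/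
def labelAt {F : Type} : List Nat → Term F → Option (F ⊕ Nat)
  | [], t => some t.label
  | i :: p, Term.app _ ts => (ts[i]?).bind (labelAt p)
  | _ :: _, Term.var _ => none

/-- outermost distinguishing position -/
def ODP (s t : Term F) (p : List Nat) : Prop :=
  (labelAt p s ≠ none ∨ labelAt p t ≠ none) ∧
  labelAt p s ≠ labelAt p t ∧
  ∀ q, q <+: p → q ≠ p → labelAt q s = labelAt q t

namespace Term

def tsize {F : Type} : Term F → Nat
  | var _ => 1
  | app _ ts => 1 + (ts.attach.map fun ⟨t, _⟩ => t.tsize).sum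

theorem attach_map_eq {F α : Type} (ts : List (Term F)) (g : Term F → α) :
    (ts.attach.map fun ⟨t, _⟩ => g t) = ts.map g := by
  exact List.attach_map_val (l := ts) (f := g)

@[simp] theorem subst_var {F : Type} (σ : Nat → Term F) (n : Nat) :
    (var n).subst σ = σ n := by rw [subst]

@[simp] theorem subst_app {F : Type} (σ : Nat → Term F) (f : F) (ts : List (Term F)) :
    (app f ts).subst σ = app f (ts.map fun t => t.subst σ) := by
  rw [subst, attach_map_eq]

@[simp] theorem varsL_var {F : Type} (n : Nat) : (var n : Term F).varsL = [n] := by rw [varsL]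

@[simp] theorem varsL_app {F : Type} (f : F) (ts : List (Term F)) :
    (app f ts).varsL = (ts.map varsL).flatten := by rw [varsL, attach_map_eq]

@[simp] theorem tsize_var {F : Type} (n : Nat) : (var n : Term F).tsize = 1 := by rw [tsize]

@[simp] theorem tsize_app {F : Type} (f : F) (ts : List (Term F)) :
    (app f ts).tsize = 1 + (ts.map tsize).sum := by rw [tsize, attach_map_eq]

theorem tsize_pos {F : Type} (t : Term F) : 0 < t.tsize := by
  cases t <;> simp [Nat.lt_of_lt_of_le Nat.zero_lt_one (Nat.le_add_right _ _)]

theorem tsize_lt_of_mem {F : Type} {t : Term F} {f : F} {ts : List (Term F)}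
    (h : t ∈ ts) : t.tsize < (app f ts).tsize := by
  have : t.tsize ≤ (ts.map tsize).sum :=
    List.single_le_sum (fun x _ => Nat.zero_le x) _ (List.mem_map_of_mem h)
  simp only [tsize_app]
  omega

/-- Custom induction principle for `Term`. -/
theorem my_ind {F : Type} {P : Term F → Prop} (hv : ∀ n, P (var n))
    (ha : ∀ (f : F) (ts : List (Term F)), (∀ t ∈ ts, P t) → P (app f ts)) : ∀ t, P t := by
  intro t
  generalize ht : t.tsize = n
  induction n using Nat.strong_induction_on generalizing t with
  | _ n IH =>
    cases t with
    | var n => exact hv n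
    | app f ts =>
      subst ht
      exact ha f ts fun t htm => IH _ (tsize_lt_of_mem htm) t rfl

end Term
namespace Term

theorem subst_subst {F : Type} (σ δ : Nat → Term F) (t : Term F) :
    (t.subst σ).subst δ = t.subst (fun x => (σ x).subst δ) := by
  induction t using my_ind with
  | hv n => simp
  | ha f ts IH =>
    simp only [subst_app, List.map_map]
    congr 1
    exact List.map_congr_left fun t ht => IH t ht

theorem subst_ext {F : Type} {σ σ' : Nat → Term F} {t : Term F}
    (h : ∀ x ∈ t.varsL, σ x = σ' x) : t.subst σ = t.subst σ' := by
  induction t using my_ind with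
  | hv n => simpa using h n (by simp)
  | ha f ts IH =>
    simp only [subst_app]
    congr 1
    refine List.map_congr_left fun t ht => IH t ht fun x hx => h x ?_
    simp only [varsL_app, List.mem_flatten]
    exact ⟨t.varsL, List.mem_map_of_mem ht, hx⟩

@[simp] theorem subst_id {F : Type} (t : Term F) : t.subst var = t := by
  induction t using my_ind with
  | hv n => simp
  | ha f ts IH =>
    simp only [subst_app]
    congr 1
    simpa using List.map_congr_left IH

theorem mem_varsL_subst {F : Type} {σ : Nat → Term F} {t : Term F} {y : Nat} :
    y ∈ (t.subst σ).varsL ↔ ∃ x ∈ t.varsL, y ∈ (σ x).varsL := by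
  induction t using my_ind with
  | hv n => simp
  | ha f ts IH =>
    simp only [subst_app, varsL_app, List.mem_flatten, List.mem_map, List.map_map]
    constructor
    · rintro ⟨l, ⟨t, ht, rfl⟩, hy⟩
      rcases (IH t ht).1 hy with ⟨x, hx, hyx⟩
      exact ⟨x, ⟨t.varsL, ⟨t, ht, rfl⟩, hx⟩, hyx⟩
    · rintro ⟨x, ⟨l, ⟨t, ht, rfl⟩, hx⟩, hyx⟩
      exact ⟨(t.subst σ).varsL, ⟨t, ht, rfl⟩, (IH t ht).2 ⟨x, hx, hyx⟩⟩

theorem tsize_subst_le {F : Type} {σ : Nat → Term F} {t : Term F} {x : Nat}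
    (hx : x ∈ t.varsL) : (σ x).tsize ≤ (t.subst σ).tsize := by
  induction t using my_ind with
  | hv n => simp at hx; subst hx; simp
  | ha f ts IH =>
    simp only [varsL_app, List.mem_flatten, List.mem_map] at hx
    obtain ⟨l, ⟨t, ht, rfl⟩, hx⟩ := hx
    calc (σ x).tsize ≤ (t.subst σ).tsize := IH t ht hx
    _ ≤ ((app f ts).subst σ).tsize := by
          rw [subst_app]; exact Nat.le_of_lt (tsize_lt_of_mem (List.mem_map_of_mem ht))

theorem tsize_subst_lt {F : Type} {σ : Nat → Term F} {t : Term F} {x : Nat}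
    (hx : x ∈ t.varsL) (hne : t ≠ var x) : (σ x).tsize < (t.subst σ).tsize := by
  cases t with
  | var n => simp at hx; subst hx; exact absurd rfl hne
  | app f ts =>
    simp only [varsL_app, List.mem_flatten, List.mem_map] at hx
    obtain ⟨l, ⟨t, ht, rfl⟩, hx⟩ := hx
    rw [subst_app]
    exact Nat.lt_of_le_of_lt (tsize_subst_le hx) (tsize_lt_of_mem (List.mem_map_of_mem ht))

theorem root_app_subst {F : Type} {t : Term F} (h : ¬ t.IsVar) (σ : Nat → Term F) :
    (t.subst σ).root = t.root := by
  cases t with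
  | var n => exact absurd trivial h
  | app f ts => simp [root]

end Term
open Term in
/-- simultaneous unification of a list of pairs -/
def SUnifies (σ : Nat → Term F) (ps : List (Term F × Term F)) : Prop :=
  ∀ pr ∈ ps, (pr.1).subst σ = (pr.2).subst σ

def varsP (ps : List (Term F × Term F)) : Finset Nat :=
  (ps.flatMap fun pr => pr.1.varsL ++ pr.2.varsL).toFinset

def psizeP (ps : List (Term F × Term F)) : Nat :=
  (ps.map fun pr => pr.1.tsize + pr.2.tsize).sum

theorem mem_varsP {ps : List (Term F × Term F)} {z : Nat} :
    z ∈ varsP ps ↔ ∃ pr ∈ ps, z ∈ pr.1.varsL ∨ z ∈ pr.2.varsL := by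
  simp [varsP, List.mem_flatMap]

theorem SUnifies_cons {σ : Nat → Term F} {p : Term F × Term F} {ps : List (Term F × Term F)} :
    SUnifies σ (p :: ps) ↔ (p.1.subst σ = p.2.subst σ ∧ SUnifies σ ps) := by
  simp [SUnifies]

theorem psizeP_cons (p : Term F × Term F) (ps : List (Term F × Term F)) :
    psizeP (p :: ps) = p.1.tsize + p.2.tsize + psizeP ps := by
  simp [psizeP]

def elimSub (x : Nat) (b : Term F) : Nat → Term F := fun z => if z = x then b else Term.var z

theorem subst_elim_of_notmem {x : Nat} {b t : Term F} (h : x ∉ t.varsL) :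
    t.subst (elimSub x b) = t := by
  rw [Term.subst_ext (σ' := Term.var) (fun z hz => by
    have : z ≠ x := fun he => h (he ▸ hz)
    simp [elimSub, this]), Term.subst_id]

theorem subst_comp_elim {x : Nat} {b : Term F} {τ : Nat → Term F}
    (hτx : τ x = b.subst τ) (c : Term F) :
    (c.subst (elimSub x b)).subst τ = c.subst τ := by
  rw [Term.subst_subst]
  refine Term.subst_ext fun z _ => ?_
  by_cases hz : z = x
  · subst hz; simp [elimSub, hτx.symm]
  · simp [elimSub, hz]

theorem velim_sound {x : Nat} {b : Term F} {rest : List (Term F × Term F)} {σ' : Nat → Term F}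
    (hocc : x ∉ b.varsL)
    (h1 : SUnifies σ' (rest.map fun pr => (pr.1.subst (elimSub x b), pr.2.subst (elimSub x b))))
    (h2 : ∀ τ, SUnifies τ (rest.map fun pr => (pr.1.subst (elimSub x b), pr.2.subst (elimSub x b))) →
      ∃ δ, ∀ z, τ z = (σ' z).subst δ) :
    SUnifies (fun z => (elimSub x b z).subst σ') ((Term.var x, b) :: rest) ∧
    ∀ τ, SUnifies τ ((Term.var x, b) :: rest) →
      ∃ δ, ∀ z, τ z = ((fun z => (elimSub x b z).subst σ') z).subst δ := by
  constructor
  · rw [SUnifies_cons]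
    constructor
    · show (Term.var x).subst _ = _
      rw [Term.subst_var]
      show (elimSub x b x).subst σ' = b.subst fun z => (elimSub x b z).subst σ'
      rw [← Term.subst_subst, subst_elim_of_notmem hocc]
      simp [elimSub]
    · intro pr hpr
      show pr.1.subst _ = pr.2.subst _
      rw [← Term.subst_subst, ← Term.subst_subst]
      exact h1 _ (List.mem_map_of_mem hpr)
  · intro τ hτ
    rw [SUnifies_cons] at hτ
    obtain ⟨hhead, hrest⟩ := hτ
    rw [Term.subst_var] at hhead
    have hτnew : SUnifies τ (rest.map fun pr => (pr.1.subst (elimSub x b), pr.2.subst (elimSub x b))) := by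
      intro pr hpr
      rw [List.mem_map] at hpr
      obtain ⟨q, hq, rfl⟩ := hpr
      show (q.1.subst _).subst τ = (q.2.subst _).subst τ
      rw [subst_comp_elim hhead, subst_comp_elim hhead]
      exact hrest q hq
    obtain ⟨δ, hδ⟩ := h2 τ hτnew
    refine ⟨δ, fun z => ?_⟩
    show τ z = ((elimSub x b z).subst σ').subst δ
    rw [Term.subst_subst]
    by_cases hz : z = x
    · rw [hz]
      have hb : (elimSub x b x) = b := by simp [elimSub]
      rw [hb, Term.subst_ext (σ' := τ) (fun y _ => (hδ y).symm)]
      exact hhead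
    · simp only [elimSub, if_neg hz, Term.subst_var]
      exact hδ z

theorem map_eq_forall_zip {α β γ : Type*} {f : α → γ} {g : β → γ} :
    ∀ {l1 : List α} {l2 : List β}, l1.map f = l2.map g → ∀ p ∈ l1.zip l2, f p.1 = g p.2 := by
  intro l1
  induction l1 with
  | nil => intro l2 _ p hp; simp at hp
  | cons a l1 IH =>
    intro l2 h p hp
    cases l2 with
    | nil => simp at hp
    | cons b l2 =>
      simp only [List.map_cons, List.cons.injEq] at h
      rw [List.zip_cons_cons, List.mem_cons] at hp
      rcases hp with rfl | hp
      · exact h.1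
      · exact IH h.2 p hp

theorem forall_zip_map_eq {α β γ : Type*} {f : α → γ} {g : β → γ} :
    ∀ {l1 : List α} {l2 : List β}, l1.length = l2.length →
      (∀ p ∈ l1.zip l2, f p.1 = g p.2) → l1.map f = l2.map g := by
  intro l1
  induction l1 with
  | nil => intro l2 h _; cases l2 with | nil => rfl | cons b l2 => simp at h
  | cons a l1 IH =>
    intro l2 hl h
    cases l2 with
    | nil => simp at hl
    | cons b l2 =>
      simp only [List.map_cons]
      rw [h (a, b) (by simp [List.zip_cons_cons]), IH (by simpa using hl)
        (fun p hp => h p (by simp [List.zip_cons_cons, hp]))]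

theorem sum_zip_tsize : ∀ {l1 l2 : List (Term F)}, l1.length = l2.length →
    ((l1.zip l2).map fun p => p.1.tsize + p.2.tsize).sum
      = (l1.map Term.tsize).sum + (l2.map Term.tsize).sum := by
  intro l1
  induction l1 with
  | nil => intro l2 h; cases l2 with | nil => simp | cons b l2 => simp at h
  | cons a l1 IH =>
    intro l2 h
    cases l2 with
    | nil => simp at h
    | cons b l2 =>
      simp only [List.zip_cons_cons, List.map_cons, List.sum_cons, IH (by simpa using h)]
      omega
theorem mgu_system_exists_aux : ∀ (n k : Nat) (ps : List (Term F × Term F)),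
    (varsP ps).card ≤ n → psizeP ps ≤ k → (∃ μ, SUnifies μ ps) →
    ∃ σ, SUnifies σ ps ∧ ∀ τ, SUnifies τ ps → ∃ δ, ∀ z, τ z = (σ z).subst δ := by
  intro n
  induction n using Nat.strong_induction_on with
  | _ n IHn =>
  intro k
  induction k using Nat.strong_induction_on with
  | _ k IHk =>
  intro ps hn hk hU
  obtain ⟨μ, hμ⟩ := hU
  cases ps with
  | nil =>
    exact ⟨Term.var, fun pr hpr => by simp at hpr, fun τ _ => ⟨τ, fun z => by simp⟩⟩
  | cons p rest =>
    obtain ⟨a, b⟩ := p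
    rw [SUnifies_cons] at hμ
    obtain ⟨hμh, hμr⟩ := hμ
    have hrest_card : varsP rest ⊆ varsP ((a, b) :: rest) := by
      intro z hz
      rw [mem_varsP] at hz ⊢
      obtain ⟨pr, hpr, h⟩ := hz
      exact ⟨pr, List.mem_cons_of_mem _ hpr, h⟩
    -- the variable-elimination step, for `(var x, c)` at the head
    have velim : ∀ (x : Nat) (c : Term F), c ≠ Term.var x → μ x = c.subst μ →
        varsP ((Term.var x, c) :: rest) = varsP ((a, b) :: rest) →
        ∃ σ, SUnifies σ ((Term.var x, c) :: rest) ∧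
          ∀ τ, SUnifies τ ((Term.var x, c) :: rest) → ∃ δ, ∀ z, τ z = (σ z).subst δ := by
      intro x c hcx hμx hvars
      have hocc : x ∉ c.varsL := by
        intro hx
        have h1 := Term.tsize_subst_lt (σ := μ) hx hcx
        rw [← hμx] at h1
        omega
      set new := rest.map fun pr => (pr.1.subst (elimSub x c), pr.2.subst (elimSub x c)) with hnew
      have hxmem : x ∈ varsP ((Term.var x, c) :: rest) := by
        rw [mem_varsP]
        exact ⟨(Term.var x, c), List.mem_cons_self, Or.inl (by simp)⟩
      have hsubnew : varsP new ⊆ (varsP ((Term.var x, c) :: rest)).erase x := by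
        intro z hz
        rw [mem_varsP] at hz
        obtain ⟨pr, hpr, h⟩ := hz
        rw [hnew, List.mem_map] at hpr
        obtain ⟨q, hq, rfl⟩ := hpr
        have key : ∀ d : Term F, z ∈ (d.subst (elimSub x c)).varsL → z ∈ d.varsL ∧ z ≠ x ∨
            z ∈ c.varsL ∧ z ≠ x := by
          intro d hd
          rw [Term.mem_varsL_subst] at hd
          obtain ⟨y, hy, hzy⟩ := hd
          by_cases hyx : y = x
          · subst hyx
            simp only [elimSub, if_pos rfl] at hzy
            exact Or.inr ⟨hzy, fun he => hocc (he ▸ hzy)⟩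
          · simp only [elimSub, if_neg hyx, Term.varsL_var, List.mem_singleton] at hzy
            subst hzy
            exact Or.inl ⟨hy, hyx⟩
        rw [Finset.mem_erase, mem_varsP]
        rcases h with h | h
        · rcases key q.1 h with ⟨h1, h2⟩ | ⟨h1, h2⟩
          · exact ⟨h2, q, List.mem_cons_of_mem _ hq, Or.inl h1⟩
          · exact ⟨h2, (Term.var x, c), List.mem_cons_self, Or.inr h1⟩
        · rcases key q.2 h with ⟨h1, h2⟩ | ⟨h1, h2⟩
          · exact ⟨h2, q, List.mem_cons_of_mem _ hq, Or.inr h1⟩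
          · exact ⟨h2, (Term.var x, c), List.mem_cons_self, Or.inr h1⟩
      have hcard1 : 1 ≤ (varsP ((Term.var x, c) :: rest)).card := Finset.card_pos.2 ⟨x, hxmem⟩
      have hcardnew : (varsP new).card ≤ n - 1 := by
        have h1 := Finset.card_le_card hsubnew
        rw [Finset.card_erase_of_mem hxmem] at h1
        have h2 : (varsP ((Term.var x, c) :: rest)).card ≤ n := by rw [hvars]; exact hn
        omega
      have hn1 : n - 1 < n := by
        have h2 : (varsP ((Term.var x, c) :: rest)).card ≤ n := by rw [hvars]; exact hn
        omega
      have hUnew : SUnifies μ new := by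
        intro pr hpr
        rw [hnew, List.mem_map] at hpr
        obtain ⟨q, hq, rfl⟩ := hpr
        show (q.1.subst _).subst μ = (q.2.subst _).subst μ
        rw [subst_comp_elim hμx, subst_comp_elim hμx]
        exact hμr q hq
      obtain ⟨σ', hσ1, hσ2⟩ := IHn (n - 1) hn1 (psizeP new) new hcardnew (le_refl _) ⟨μ, hUnew⟩
      obtain ⟨hu, hm⟩ := velim_sound hocc hσ1 hσ2
      exact ⟨_, hu, hm⟩
    cases a with
    | var x =>
      by_cases hbx : b = Term.var x
      · -- trivial pair, drop it
        subst hbx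
        have hsize : psizeP rest < k := by
          have h1 : psizeP ((Term.var x, Term.var x) :: rest) = 1 + 1 + psizeP rest := by
            simp [psizeP_cons]
          omega
        obtain ⟨σ, hσ1, hσ2⟩ := IHk (psizeP rest) hsize rest
          (le_trans (Finset.card_le_card hrest_card) hn) (le_refl _) ⟨μ, hμr⟩
        refine ⟨σ, ?_, fun τ hτ => hσ2 τ fun pr hpr => hτ pr (List.mem_cons_of_mem _ hpr)⟩
        rw [SUnifies_cons]
        exact ⟨rfl, hσ1⟩
      · exact velim x b hbx (by rw [Term.subst_var] at hμh; exact hμh) rfl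
    | app f as =>
      cases b with
      | var x =>
        have hax : Term.app f as ≠ Term.var x := by intro h; cases h
        obtain ⟨σ, hσ1, hσ2⟩ := velim x (Term.app f as) hax
          (by rw [Term.subst_var] at hμh; exact hμh.symm)
          (by
            ext z
            rw [mem_varsP, mem_varsP]
            constructor <;> rintro ⟨pr, hpr, h⟩ <;> rw [List.mem_cons] at hpr <;>
              rcases hpr with rfl | hpr
            · exact ⟨_, List.mem_cons_self, h.symm⟩
            · exact ⟨pr, List.mem_cons_of_mem _ hpr, h⟩
            · exact ⟨_, List.mem_cons_self, h.symm⟩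
            · exact ⟨pr, List.mem_cons_of_mem _ hpr, h⟩)
        refine ⟨σ, ?_, ?_⟩
        · rw [SUnifies_cons] at hσ1 ⊢
          exact ⟨hσ1.1.symm, hσ1.2⟩
        · intro τ hτ
          rw [SUnifies_cons] at hτ
          exact hσ2 τ (SUnifies_cons.2 ⟨hτ.1.symm, hτ.2⟩)
      | app g bs =>
        simp only [Term.subst_app] at hμh
        injection hμh with hfg hmaps
        have hlen : as.length = bs.length := by
          have := congrArg List.length hmaps
          simpa using this
        set new := as.zip bs ++ rest with hnew
        have hvarsnew : varsP new ⊆ varsP ((Term.app f as, Term.app g bs) :: rest) := by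
          intro z hz
          rw [mem_varsP] at hz ⊢
          obtain ⟨pr, hpr, h⟩ := hz
          rw [hnew, List.mem_append] at hpr
          rcases hpr with hpr | hpr
          · obtain ⟨h1, h2⟩ := List.of_mem_zip hpr
            refine ⟨(Term.app f as, Term.app g bs), List.mem_cons_self, ?_⟩
            rcases h with h | h
            · exact Or.inl (by
                simp only [Term.varsL_app, List.mem_flatten]
                exact ⟨pr.1.varsL, List.mem_map_of_mem h1, h⟩)
            · exact Or.inr (by
                simp only [Term.varsL_app, List.mem_flatten]
                exact ⟨pr.2.varsL, List.mem_map_of_mem h2, h⟩)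
          · exact ⟨pr, List.mem_cons_of_mem _ hpr, h⟩
        have hsizenew : psizeP new < k := by
          have h1 : psizeP new = psizeP (as.zip bs) + psizeP rest := by
            rw [hnew]; simp [psizeP]
          have h2 : psizeP (as.zip bs) = (as.map Term.tsize).sum + (bs.map Term.tsize).sum := by
            rw [psizeP]; exact sum_zip_tsize hlen
          have h3 := psizeP_cons (Term.app f as, Term.app g bs) rest
          simp only [Term.tsize_app] at h3
          omega
        have hUnew : SUnifies μ new := by
          intro pr hpr
          rw [hnew, List.mem_append] at hpr
          rcases hpr with hpr | hpr
          · exact map_eq_forall_zip hmaps pr hpr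
          · exact hμr pr hpr
        obtain ⟨σ, hσ1, hσ2⟩ := IHk (psizeP new) hsizenew new
          (le_trans (Finset.card_le_card hvarsnew) hn) (le_refl _) ⟨μ, hUnew⟩
        have hσzip : ∀ pr ∈ as.zip bs, pr.1.subst σ = pr.2.subst σ := fun pr hpr =>
          hσ1 pr (by rw [hnew, List.mem_append]; exact Or.inl hpr)
        refine ⟨σ, ?_, ?_⟩
        · rw [SUnifies_cons]
          refine ⟨?_, fun pr hpr => hσ1 pr (by rw [hnew, List.mem_append]; exact Or.inr hpr)⟩
          simp only [Term.subst_app]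
          rw [hfg, forall_zip_map_eq hlen hσzip]
        · intro τ hτ
          rw [SUnifies_cons] at hτ
          obtain ⟨hτh, hτr⟩ := hτ
          simp only [Term.subst_app] at hτh
          injection hτh with _ hτmaps
          refine hσ2 τ fun pr hpr => ?_
          rw [hnew, List.mem_append] at hpr
          rcases hpr with hpr | hpr
          · exact map_eq_forall_zip hτmaps pr hpr
          · exact hτr pr hpr
namespace Term
@[simp] theorem root_var {F : Type} (n : Nat) : (var n : Term F).root = none := by rw [root]
@[simp] theorem root_app {F : Type} (f : F) (ts : List (Term F)) :
    (app f ts).root = some f := by rw [root]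
theorem exists_app_of_not_isVar {F : Type} {t : Term F} (h : ¬ t.IsVar) :
    ∃ f ts, t = app f ts := by
  cases t with
  | var n => exact absurd trivial h
  | app f ts => exact ⟨f, ts, rfl⟩
end Term

theorem SubtermAt.nil_eq {t u : Term F} (h : SubtermAt t [] u) : u = t := by cases h; rfl

theorem ReplaceAt.nil_eq {t v t' : Term F} (h : ReplaceAt t [] v t') : t' = v := by cases h; rfl

theorem SubtermAt.cons_inv {s v : Term F} {i : Nat} {p : List Nat}
    (h : SubtermAt s (i :: p) v) :
    ∃ f ts u, s = Term.app f ts ∧ ts[i]? = some u ∧ SubtermAt u p v := by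
  cases h with
  | there hget hsub => exact ⟨_, _, _, rfl, hget, hsub⟩

theorem ReplaceAt.cons_inv {f : F} {ts : List (Term F)} {i : Nat} {p : List Nat} {v t' : Term F}
    (h : ReplaceAt (Term.app f ts) (i :: p) v t') :
    ∃ u w, ts[i]? = some u ∧ ReplaceAt u p v w ∧ t' = Term.app f (ts.set i w) := by
  cases h with
  | there hget hrep => exact ⟨_, _, hget, hrep, rfl⟩

theorem SubtermAt.trans {t u v : Term F} {p q : List Nat}
    (h1 : SubtermAt t p u) (h2 : SubtermAt u q v) : SubtermAt t (p ++ q) v := by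
  induction h1 with
  | here => exact h2
  | there hget _ IH => exact SubtermAt.there hget (IH h2)

theorem replace_of_subterm {t u : Term F} {p : List Nat} (h1 : SubtermAt t p u) :
    ∀ {q : List Nat} {v w : Term F}, ReplaceAt u q v w → ∃ t', ReplaceAt t (p ++ q) v t' := by
  induction h1 with
  | here => exact fun h => ⟨_, h⟩
  | there hget _ IH =>
    intro q v w h
    obtain ⟨t', ht'⟩ := IH h
    exact ⟨_, ReplaceAt.there hget ht'⟩

theorem onestep_lift {R : TRS F} {t u u' : Term F} {p : List Nat}
    (hsub : SubtermAt t p u) (hstep : OneStep R u u') : ∃ t', OneStep R t t' := by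
  obtain ⟨ρ, hρ, σ, q, hq1, hq2⟩ := hstep
  obtain ⟨t', ht'⟩ := replace_of_subterm hsub hq2
  exact ⟨t', ρ, hρ, σ, p ++ q, hsub.trans hq1, ht'⟩

theorem normal_subterm {R : TRS F} {t u : Term F} {p : List Nat}
    (h : NormalForm R t) (hsub : SubtermAt t p u) : NormalForm R u := by
  intro u' hstep
  obtain ⟨t', ht'⟩ := onestep_lift hsub hstep
  exact h t' ht'

theorem RootStep.toOneStep {R : TRS F} {s t : Term F} (h : RootStep R s t) : OneStep R s t := by
  obtain ⟨ρ, hρ, σ, h1, h2⟩ := h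
  refine ⟨ρ, hρ, σ, [], ?_, ?_⟩
  · rw [h1]; exact SubtermAt.here _
  · rw [h2]; exact ReplaceAt.here _ _

/-- a rewrite step strictly below the root -/
def ArgStep (R : TRS F) (s t : Term F) : Prop :=
  ∃ f ts i u w, s = Term.app f ts ∧ ts[i]? = some u ∧ OneStep R u w ∧
    t = Term.app f (ts.set i w)

theorem onestep_cases {R : TRS F} {s t : Term F} (h : OneStep R s t) :
    RootStep R s t ∨ ArgStep R s t := by
  obtain ⟨ρ, hρ, σ, p, hsub, hrep⟩ := h
  cases p with
  | nil => exact Or.inl ⟨ρ, hρ, σ, hsub.nil_eq.symm, hrep.nil_eq⟩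
  | cons i p =>
    obtain ⟨f, ts, u, rfl, hget, hsub'⟩ := hsub.cons_inv
    obtain ⟨u', w, hget', hrep', rfl⟩ := hrep.cons_inv
    have huu : u' = u := by rw [hget] at hget'; injection hget' with h; exact h.symm
    subst huu
    exact Or.inr ⟨f, ts, i, u', w, rfl, hget, ⟨ρ, hρ, σ, p, hsub', hrep'⟩, rfl⟩

theorem ArgStep.toOneStep {R : TRS F} {s t : Term F} (h : ArgStep R s t) : OneStep R s t := by
  obtain ⟨f, ts, i, u, w, rfl, hget, ⟨ρ, hρ, σ, q, hq1, hq2⟩, rfl⟩ := h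
  exact ⟨ρ, hρ, σ, i :: q, SubtermAt.there hget hq1, ReplaceAt.there hget hq2⟩

theorem ArgStep.root_eq {R : TRS F} {s t : Term F} (h : ArgStep R s t) :
    s.root = t.root ∧ ∃ f ts, s = Term.app f ts := by
  obtain ⟨f, ts, i, u, w, rfl, _, _, rfl⟩ := h
  exact ⟨by simp, f, ts, rfl⟩

def ArgStar (R : TRS F) : Term F → Term F → Prop := Relation.ReflTransGen (ArgStep R)

theorem ArgStar.toStar {R : TRS F} {s t : Term F} (h : ArgStar R s t) : StarRW R s t :=
  Relation.ReflTransGen.mono (fun _ _ h => ArgStep.toOneStep h) _ _ h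

theorem ArgStar.root_eq {R : TRS F} {s t : Term F} (h : ArgStar R s t) : s.root = t.root := by
  induction h with
  | refl => rfl
  | tail _ hstep IH => exact IH.trans hstep.root_eq.1

theorem get?_len_append (xs ys : List (Term F)) (u : Term F) :
    (xs ++ u :: ys)[xs.length]? = some u := by
  induction xs with
  | nil => rfl
  | cons a xs IH => simpa using IH

theorem set_len_append (xs ys : List (Term F)) (u w : Term F) :
    (xs ++ u :: ys).set xs.length w = xs ++ w :: ys := by
  induction xs with
  | nil => rfl
  | cons a xs IH => simpa using IH

theorem onestep_arg {R : TRS F} {u w : Term F} (h : OneStep R u w) (f : F)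
    (xs ys : List (Term F)) :
    OneStep R (Term.app f (xs ++ u :: ys)) (Term.app f (xs ++ w :: ys)) := by
  refine ArgStep.toOneStep ⟨f, xs ++ u :: ys, xs.length, u, w, rfl, get?_len_append xs ys u, h, ?_⟩
  rw [set_len_append]

theorem starRW_arg {R : TRS F} {a b : Term F} (h : StarRW R a b) (f : F)
    (xs ys : List (Term F)) :
    StarRW R (Term.app f (xs ++ a :: ys)) (Term.app f (xs ++ b :: ys)) := by
  induction h with
  | refl => exact Relation.ReflTransGen.refl
  | tail _ hstep IH => exact IH.tail (onestep_arg hstep f xs ys)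

theorem starRW_congr_args {R : TRS F} {f : F} :
    ∀ {ss ts : List (Term F)}, List.Forall₂ (StarRW R) ss ts →
      ∀ xs : List (Term F), StarRW R (Term.app f (xs ++ ss)) (Term.app f (xs ++ ts)) := by
  intro ss ts h
  induction h with
  | nil => intro xs; exact Relation.ReflTransGen.refl
  | @cons a b ss' ts' hab _ IH =>
    intro xs
    refine (starRW_arg hab f xs ss').trans ?_
    have h1 : xs ++ b :: ss' = (xs ++ [b]) ++ ss' := by simp
    have h2 : xs ++ b :: ts' = (xs ++ [b]) ++ ts' := by simp
    rw [h1, h2]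
    exact IH (xs ++ [b])

theorem starRW_app {R : TRS F} {f : F} {ss ts : List (Term F)}
    (h : List.Forall₂ (StarRW R) ss ts) :
    StarRW R (Term.app f ss) (Term.app f ts) := starRW_congr_args h []

theorem exists_nf {R : TRS F} (hT : Terminating R) (t : Term F) : ∃ u, NFof R t u := by
  induction t using hT.induction with
  | _ t IH =>
    by_cases h : NormalForm R t
    · exact ⟨t, Relation.ReflTransGen.refl, h⟩
    · have : ∃ u, OneStep R t u := by
        by_contra hc
        push_neg at hc
        exact h hc
      obtain ⟨u, hu⟩ := this
      obtain ⟨v, hv1, hv2⟩ := IH u hu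
      exact ⟨v, Relation.ReflTransGen.head hu hv1, hv2⟩

theorem star_of_nf {R : TRS F} {a b : Term F} (h : NormalForm R a) (hs : StarRW R a b) :
    a = b := by
  rcases hs.cases_head with h' | ⟨c, hc, _⟩
  · exact h'
  · exact absurd hc (h c)

theorem star_to_nf {R : TRS F} (hC : Confluent R) {s a N : Term F}
    (h1 : StarRW R s a) (h2 : NFof R s N) : StarRW R a N := by
  obtain ⟨u, hu1, hu2⟩ := hC s a N h1 h2.1
  rwa [← star_of_nf h2.2 hu2] at hu1

theorem reduct_app {R : TRS F} (hQ1 : ∀ e ∈ R, ¬ e.1.IsVar ∧ ¬ e.2.IsVar)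
    {f : F} {ss : List (Term F)} {x : Term F} (h : StarRW R (Term.app f ss) x) :
    ∃ g xs, x = Term.app g xs := by
  induction h with
  | refl => exact ⟨f, ss, rfl⟩
  | tail _ hstep IH =>
    obtain ⟨g, xs, rfl⟩ := IH
    rcases onestep_cases hstep with hr | ha
    · obtain ⟨ρ, hρ, σ, _, h2⟩ := hr
      obtain ⟨g', ts', hg'⟩ := Term.exists_app_of_not_isVar (hQ1 ρ hρ).2
      exact ⟨g', ts'.map fun t => t.subst σ, by rw [h2, hg', Term.subst_app]⟩
    · obtain ⟨f', ts', i, u, w, _, _, _, rfl⟩ := ha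
      exact ⟨f', ts'.set i w, rfl⟩

theorem extract_first_root {R : TRS F} {s u v t : Term F}
    (h1 : StarRW R s u) (h2 : RootStep R u v) (h3 : StarRW R v t) :
    ∃ u' v', ArgStar R s u' ∧ RootStep R u' v' ∧ StarRW R v' t := by
  induction h1 using Relation.ReflTransGen.head_induction_on with
  | refl => exact ⟨u, v, Relation.ReflTransGen.refl, h2, h3⟩
  | head hstep htail IH =>
    rcases onestep_cases hstep with hr | ha
    · exact ⟨_, _, Relation.ReflTransGen.refl, hr,
        (htail.tail h2.toOneStep).trans h3⟩
    · obtain ⟨u', v', harg, hr, hs⟩ := IH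
      exact ⟨u', v', Relation.ReflTransGen.head ha harg, hr, hs⟩

theorem extract_root_change {R : TRS F} {a b : Term F}
    (h : StarRW R a b) (hne : a.root ≠ b.root) :
    ∃ u v, ArgStar R a u ∧ RootStep R u v ∧ StarRW R v b := by
  induction h using Relation.ReflTransGen.head_induction_on with
  | refl => exact absurd rfl hne
  | @head a' c hstep htail IH =>
    rcases onestep_cases hstep with hr | ha
    · exact ⟨a', c, Relation.ReflTransGen.refl, hr, htail⟩
    · have hroot := ha.root_eq.1
      obtain ⟨u, v, harg, hr, hs⟩ := IH (by rw [← hroot]; exact hne)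
      exact ⟨u, v, Relation.ReflTransGen.head ha harg, hr, hs⟩

theorem forall₂_nf_right {R : TRS F} : ∀ {as ns : List (Term F)},
    List.Forall₂ (NFof R) as ns → ∀ b ∈ ns, NormalForm R b := by
  intro as ns h
  induction h with
  | nil => intro b hb; simp at hb
  | cons hab _ IH =>
    intro b hb
    rcases List.mem_cons.1 hb with rfl | hb
    · exact hab.2
    · exact IH b hb

theorem exists_nf_list {R : TRS F} (hT : Terminating R) (as : List (Term F)) :
    ∃ ns, List.Forall₂ (NFof R) as ns := by
  induction as with
  | nil => exact ⟨[], List.Forall₂.nil⟩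
  | cons a as IH =>
    obtain ⟨n, hn⟩ := exists_nf hT a
    obtain ⟨ns, hns⟩ := IH
    exact ⟨n :: ns, List.Forall₂.cons hn hns⟩
theorem mgu_exists {s t : Term F} (h : ∃ μ, Unifies μ s t) : ∃ σ, IsMGU σ s t := by
  obtain ⟨μ, hμ⟩ := h
  have hU : SUnifies μ [(s, t)] := by
    intro pr hpr
    rw [List.mem_singleton] at hpr
    subst hpr
    exact hμ
  obtain ⟨σ, h1, h2⟩ := mgu_system_exists_aux (varsP [(s, t)]).card (psizeP [(s, t)])
    [(s, t)] le_rfl le_rfl ⟨μ, hU⟩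
  refine ⟨σ, h1 (s, t) (List.mem_singleton_self _), fun τ hτ => h2 τ ?_⟩
  intro pr hpr
  rw [List.mem_singleton] at hpr
  subst hpr
  exact hτ

theorem le_foldr_max : ∀ (l : List Nat), ∀ y ∈ l, y ≤ l.foldr max 0 := by
  intro l
  induction l with
  | nil => intro y hy; simp at hy
  | cons a l IH =>
    intro y hy
    rcases List.mem_cons.1 hy with rfl | hy
    · exact le_max_left _ _
    · exact le_trans (IH y hy) (le_max_right _ _)

theorem nf_root_structure {R : TRS F} (hlm : LMSystem R) {x : F} {as : List (Term F)}
    {N : Term F} (hstar : StarRW R (Term.app x as) N) (hNnf : NormalForm R N) :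
    N.root = some x ∨
      ∃ l r τ, (l, r) ∈ R ∧ (l.subst τ).root = some x ∧ N = r.subst τ := by
  obtain ⟨ns, hns⟩ := exists_nf_list hlm.convergent.2 as
  have hw : StarRW R (Term.app x as) (Term.app x ns) :=
    starRW_app (List.Forall₂.imp (fun _ _ h => h.1) hns)
  have hwN : StarRW R (Term.app x ns) N := star_to_nf hlm.convergent.1 hw ⟨hstar, hNnf⟩
  by_cases hred : NormalForm R (Term.app x ns)
  · left
    rw [← star_of_nf hred hwN]
    simp
  · right
    have heps : EpsIrreducible R (Term.app x ns) := by
      intro p u hsub hne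
      cases p with
      | nil => exact absurd rfl hne
      | cons i p' =>
        obtain ⟨f', ts', u₀, heq, hget, hsub'⟩ := hsub.cons_inv
        injection heq with h1 h2
        subst h2
        have hu₀ : NormalForm R u₀ := forall₂_nf_right hns u₀ (List.mem_of_getElem? hget)
        exact normal_subterm hu₀ hsub'
    have hone := hlm.forwardClosed _ ⟨heps, hred⟩ N ⟨hwN, hNnf⟩
    obtain ⟨ρ, hρ, σ, p, hsub, hrep⟩ := hone
    cases p with
    | cons i p' =>
      exfalso
      have hnf := heps _ _ hsub (by simp)
      exact hnf _ ⟨ρ, hρ, σ, [], SubtermAt.here _, ReplaceAt.here _ _⟩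
    | nil =>
      have h1 := hsub.nil_eq
      have h2 := hrep.nil_eq
      refine ⟨ρ.1, ρ.2, σ, by simpa using hρ, by rw [h1]; simp, h2⟩

theorem ML {R : TRS F} (hlm : LMSystem R) {f : F} {ss ts : List (Term F)} {u v : Term F}
    (h1 : StarRW R (Term.app f ss) u) (h2 : RootStep R u v)
    (h3 : StarRW R v (Term.app f ts)) : False := by
  classical
  have hQ1 : ∀ e ∈ R, ¬ e.1.IsVar ∧ ¬ e.2.IsVar :=
    fun e he => hlm.quasiDet.1 e (Set.mem_union_left _ he)
  have hQ2 : ∀ e ∈ R, e.1.root ≠ e.2.root :=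
    fun e he => hlm.quasiDet.2.1 e (Set.mem_union_left _ he)
  have hQ3 := hlm.quasiDet.2.2
  have hC : Confluent R := hlm.convergent.1
  obtain ⟨u₁, v₁, ha1, hr1, hs1⟩ := extract_first_root h1 h2 h3
  have hstep₁ := hr1.toOneStep
  obtain ⟨e₁, he₁, σ₁, hu₁, hv₁⟩ := hr1
  obtain ⟨lf, lts, hl₁⟩ := Term.exists_app_of_not_isVar (hQ1 e₁ he₁).1
  obtain ⟨g₁, rts, hr₁⟩ := Term.exists_app_of_not_isVar (hQ1 e₁ he₁).2
  have hu₁root : u₁.root = some f := by rw [← ha1.root_eq]; simp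
  have hlf : f = lf := by
    have hx : u₁.root = some lf := by rw [hu₁, hl₁]; simp
    rw [hu₁root] at hx
    exact Option.some.inj hx
  subst hlf
  have hfg₁ : (some f : Option F) ≠ some g₁ := by
    have hx := hQ2 e₁ he₁
    rw [hl₁, hr₁] at hx
    simpa using hx
  have hfg : f ≠ g₁ := fun hh => hfg₁ (by rw [hh])
  obtain ⟨N, hsN, hNnf⟩ := exists_nf hlm.convergent.2 (Term.app f ss)
  obtain ⟨nh, hNs, hNeq⟩ := reduct_app hQ1 hsN
  have hNroot : N.root = some nh := by rw [hNeq]; simp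
  have hsu₁ : StarRW R (Term.app f ss) u₁ := ha1.toStar
  have hsv₁ : StarRW R (Term.app f ss) v₁ := hsu₁.tail hstep₁
  have hvstarN : StarRW R v₁ N := star_to_nf hC hsv₁ ⟨hsN, hNnf⟩
  have hustarN : StarRW R u₁ N := star_to_nf hC hsu₁ ⟨hsN, hNnf⟩
  have hv₁eq : v₁ = Term.app g₁ (rts.map fun t => t.subst σ₁) := by
    rw [hv₁, hr₁, Term.subst_app]
  have hu₁eq : u₁ = Term.app f (lts.map fun t => t.subst σ₁) := by
    rw [hu₁, hl₁, Term.subst_app]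
  rw [hv₁eq] at hvstarN
  rw [hu₁eq] at hustarN
  by_cases hhf : nh = f
  · -- Case (i): the normal form has root f
    have hNf : N.root = some f := by rw [hNroot, hhf]
    rcases nf_root_structure hlm hvstarN hNnf with hroot | ⟨ls, rs, τ, hmem, hlroot, hNr⟩
    · exact hfg₁ (hNf.symm.trans hroot)
    · have hlsnv := (hQ1 (ls, rs) hmem).1
      have hrsnv := (hQ1 (ls, rs) hmem).2
      have hlsroot : ls.root = some g₁ := by rw [← Term.root_app_subst hlsnv τ]; exact hlroot
      have hrsroot : rs.root = some f := by
        rw [← Term.root_app_subst hrsnv τ, ← hNr]; exact hNf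
      have hsim : RootPairSimilar e₁ (ls, rs) := by
        refine Or.inr ⟨?_, ?_⟩
        · show e₁.1.root = rs.root
          rw [hl₁, hrsroot]; simp
        · show e₁.2.root = ls.root
          rw [hr₁, hlsroot]; simp
      by_cases hec : e₁ = (ls, rs)
      · have hx : e₁.1.root = some f := by rw [hl₁]; simp
        rw [hec] at hx
        have hx2 : ls.root = some f := hx
        exact hfg₁ (hlsroot.symm.trans hx2).symm
      · exact hQ3 e₁ (Set.mem_union_left _ he₁) (ls, rs) (Set.mem_union_left _ hmem) hec hsim
  · by_cases hg₁h : g₁ = nh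
    · -- second root step exists
      have hNg : N.root = some g₁ := by rw [hNroot, ← hg₁h]
      have hv₁ts : v₁.root ≠ (Term.app f ts).root := by
        rw [hv₁eq]
        simp only [Term.root_app, ne_eq, Option.some.injEq]
        exact fun hh => hfg hh.symm
      obtain ⟨u₂, v₂, ha2, hr2, hs2⟩ := extract_root_change hs1 hv₁ts
      have hstep₂ := hr2.toOneStep
      obtain ⟨e₂, he₂, σ₂, hu₂, hv₂⟩ := hr2
      obtain ⟨l₂f, l₂ts, hl₂⟩ := Term.exists_app_of_not_isVar (hQ1 e₂ he₂).1
      obtain ⟨g₂, r₂ts, hr₂⟩ := Term.exists_app_of_not_isVar (hQ1 e₂ he₂).2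
      have hu₂root : u₂.root = some g₁ := by rw [← ha2.root_eq, hv₁eq]; simp
      have hl₂f : g₁ = l₂f := by
        have hx : u₂.root = some l₂f := by rw [hu₂, hl₂]; simp
        rw [hu₂root] at hx
        exact Option.some.inj hx
      subst hl₂f
      have hg₁g₂ : (some g₁ : Option F) ≠ some g₂ := by
        have hx := hQ2 e₂ he₂
        rw [hl₂, hr₂] at hx
        simpa using hx
      have hsv₂ : StarRW R (Term.app f ss) v₂ := (hsv₁.trans ha2.toStar).tail hstep₂
      have hv₂starN : StarRW R v₂ N := star_to_nf hC hsv₂ ⟨hsN, hNnf⟩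
      have hv₂eq : v₂ = Term.app g₂ (r₂ts.map fun t => t.subst σ₂) := by
        rw [hv₂, hr₂, Term.subst_app]
      rw [hv₂eq] at hv₂starN
      rcases nf_root_structure hlm hv₂starN hNnf with hroot | ⟨ls, rs, τ, hmem, hlroot, hNr⟩
      · exact hg₁g₂ (hNg.symm.trans hroot)
      · have hlsnv := (hQ1 (ls, rs) hmem).1
        have hrsnv := (hQ1 (ls, rs) hmem).2
        have hlsroot : ls.root = some g₂ := by rw [← Term.root_app_subst hlsnv τ]; exact hlroot
        have hrsroot : rs.root = some g₁ := by
          rw [← Term.root_app_subst hrsnv τ, ← hNr]; exact hNg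
        have hsim : RootPairSimilar e₂ (ls, rs) := by
          refine Or.inr ⟨?_, ?_⟩
          · show e₂.1.root = rs.root
            rw [hl₂, hrsroot]; simp
          · show e₂.2.root = ls.root
            rw [hr₂, hlsroot]; simp
        by_cases hec : e₂ = (ls, rs)
        · have hx : e₂.1.root = some g₁ := by rw [hl₂]; simp
          rw [hec] at hx
          have hx2 : ls.root = some g₁ := hx
          exact hg₁g₂ (hx2.symm.trans hlsroot)
        · exact hQ3 e₂ (Set.mem_union_left _ he₂) (ls, rs) (Set.mem_union_left _ hmem) hec hsim
    · -- main case
      rcases nf_root_structure hlm hustarN hNnf with hroot | ⟨l₀, r₀, τ₀, hmem₀, hl₀, hN₀⟩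
      · rw [hNroot] at hroot
        injection hroot with hroot
        exact hhf hroot
      rcases nf_root_structure hlm hvstarN hNnf with hroot | ⟨l₁s, r₁s, τ₁, hmem₁, hl₁s, hN₁⟩
      · rw [hNroot] at hroot
        injection hroot with hroot
        exact hg₁h hroot.symm
      have hl₀nv := (hQ1 (l₀, r₀) hmem₀).1
      have hr₀nv := (hQ1 (l₀, r₀) hmem₀).2
      have hl₁nv := (hQ1 (l₁s, r₁s) hmem₁).1
      have hr₁nv := (hQ1 (l₁s, r₁s) hmem₁).2
      have hl₀root : l₀.root = some f := by rw [← Term.root_app_subst hl₀nv τ₀]; exact hl₀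
      have hl₁root : l₁s.root = some g₁ := by rw [← Term.root_app_subst hl₁nv τ₁]; exact hl₁s
      set M : Nat := ((l₀.varsL ++ r₀.varsL).foldr max 0) + 1 with hMdef
      have hMlt : ∀ y ∈ l₀.varsL ++ r₀.varsL, y < M := by
        intro y hy
        have := le_foldr_max _ y hy
        omega
      set ρr : Nat → Term F := fun n => Term.var (n + M) with hρrdef
      set μ : Nat → Term F := fun z => if z < M then τ₀ z else τ₁ (z - M) with hμdef
      have hren : IsRenaming ρr := ⟨fun n => n + M, fun a b hab => by dsimp at hab; omega, fun n => rfl⟩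
      have hsubμτ₀ : ∀ t : Term F, (∀ y ∈ t.varsL, y < M) → t.subst μ = t.subst τ₀ :=
        fun t ht => Term.subst_ext fun z hz => by rw [hμdef]; simp [ht z hz]
      have hsubρμ : ∀ t : Term F, (t.subst ρr).subst μ = t.subst τ₁ := by
        intro t
        rw [Term.subst_subst]
        refine Term.subst_ext fun z _ => ?_
        rw [hρrdef]
        simp only [Term.subst_var]
        rw [hμdef]
        simp only [Nat.add_sub_cancel, if_neg (Nat.not_lt.2 (Nat.le_add_left M z))]
      have hUnif : Unifies μ r₀ (r₁s.subst ρr) := by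
        show r₀.subst μ = _
        rw [hsubμτ₀ r₀ (fun y hy => hMlt y (List.mem_append_right _ hy)), hsubρμ]
        rw [← hN₀, ← hN₁]
      obtain ⟨σs, hmgu⟩ := mgu_exists ⟨μ, hUnif⟩
      by_cases heq : l₀.subst σs = (l₁s.subst ρr).subst σs
      · obtain ⟨δ, hδ⟩ := hmgu.2 μ hUnif
        have hcomp : ∀ t : Term F, t.subst μ = (t.subst σs).subst δ := by
          intro t
          rw [Term.subst_subst]
          exact Term.subst_ext fun z _ => hδ z
        have hx : l₀.subst μ = (l₁s.subst ρr).subst μ := by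
          rw [hcomp l₀, hcomp (l₁s.subst ρr), heq]
        rw [hsubμτ₀ l₀ (fun y hy => hMlt y (List.mem_append_left _ hy)), hsubρμ] at hx
        have hx2 := congrArg Term.root hx
        rw [hl₀, hl₁s] at hx2
        injection hx2 with hx2
        exact hfg hx2
      · set E : Rule F := (l₀.subst σs, (l₁s.subst ρr).subst σs) with hEdef
        have hE : E ∈ RHSset R :=
          Set.mem_union_right _ ⟨l₀, r₀, l₁s, r₁s, ρr, σs, hmem₀, hmem₁, hren, hmgu, heq, rfl⟩
        have hEl : E.1.root = some f := by
          show (l₀.subst σs).root = some f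
          rw [Term.root_app_subst hl₀nv σs]
          exact hl₀root
        have hl₁nv' : ¬ l₁s.IsVar := hl₁nv
        have hl₁ρnv : ¬ (l₁s.subst ρr).IsVar := by
          obtain ⟨lf₁, lts₁, hshape⟩ := Term.exists_app_of_not_isVar hl₁nv'
          rw [hshape, Term.subst_app]
          exact fun hc => hc
        have hEr : E.2.root = some g₁ := by
          show ((l₁s.subst ρr).subst σs).root = some g₁
          rw [Term.root_app_subst hl₁ρnv σs, Term.root_app_subst hl₁nv ρr]
          exact hl₁root
        have hsim : RootPairSimilar e₁ E := by
          refine Or.inl ⟨?_, ?_⟩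
          · rw [hl₁, hEl]; simp
          · rw [hr₁, hEr]; simp
        by_cases hee : e₁ = E
        · set τ' : Nat → Term F := fun z => (ρr z).subst σs with hτ'def
          have he2 : e₁.2 = l₁s.subst τ' := by
            have hx : e₁.2 = (l₁s.subst ρr).subst σs := by rw [hee]
            rw [hx, Term.subst_subst]
          have hstep : OneStep R e₁.2 (r₁s.subst τ') := by
            refine ⟨(l₁s, r₁s), hmem₁, τ', [], ?_, ?_⟩
            · rw [he2]
              exact SubtermAt.here _
            · exact ReplaceAt.here _ _
          exact hlm.rightReduced e₁ he₁ _ hstep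
        · exact hQ3 e₁ (Set.mem_union_left _ he₁) E hE hee hsim
theorem forall₂_set_back {R : TRS F} :
    ∀ {as : List (Term F)} {i : Nat} {u w : Term F} {ts : List (Term F)},
      as[i]? = some u → OneStep R u w →
      List.Forall₂ (StarRW R) (as.set i w) ts → List.Forall₂ (StarRW R) as ts := by
  intro as
  induction as with
  | nil => intro i u w ts hget; simp at hget
  | cons a as IH =>
    intro i u w ts hget hstep hf
    cases i with
    | zero =>
      simp only [List.getElem?_cons_zero, Option.some.injEq] at hget
      subst hget
      rw [List.set_cons_zero] at hf
      cases hf with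
      | cons hab htail =>
        exact List.Forall₂.cons (Relation.ReflTransGen.head hstep hab) htail
    | succ i =>
      rw [List.set_cons_succ] at hf
      cases hf with
      | cons hab htail =>
        exact List.Forall₂.cons hab (IH hget hstep htail)

theorem forall₂_star_refl {R : TRS F} (as : List (Term F)) :
    List.Forall₂ (StarRW R) as as := by
  induction as with
  | nil => exact List.Forall₂.nil
  | cons a as IH => exact List.Forall₂.cons Relation.ReflTransGen.refl IH

theorem star_decomp_args {R : TRS F} (hlm : LMSystem R) {f : F} {ts : List (Term F)} :
    ∀ {a : Term F}, StarRW R a (Term.app f ts) →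
      ∀ as : List (Term F), a = Term.app f as → List.Forall₂ (StarRW R) as ts := by
  intro a h
  induction h using Relation.ReflTransGen.head_induction_on with
  | refl =>
    intro as ha
    injection ha with h1 h2
    subst h2
    exact forall₂_star_refl ts
  | @head a' c hstep htail IH =>
    intro as ha
    subst ha
    rcases onestep_cases hstep with hr | harg
    · exact absurd (ML hlm (Relation.ReflTransGen.refl) hr htail) (fun h => h)
    · obtain ⟨f', ts', i, u₀, w, heq, hget, hstep', rfl⟩ := harg
      injection heq with h1 h2
      subst h1
      subst h2
      exact forall₂_set_back hget hstep' (IH _ rfl)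
/-- in an LM-system, `f(s₁,…,sₙ) →* f(t₁,…,tₙ)` iff `sᵢ →* tᵢ` for all
`i`; moreover no rewrite sequence between such terms contains a root rewrite step. -/
theorem same_root_reductions {F : Type} (R : TRS F) (hlm : LMSystem R)
    (f : F) (ss ts : List (Term F)) :
    (StarRW R (Term.app f ss) (Term.app f ts) ↔ List.Forall₂ (StarRW R) ss ts) ∧
    (∀ u v, StarRW R (Term.app f ss) u → RootStep R u v →
      StarRW R v (Term.app f ts) → False) := by
  constructor
  · constructor
    · intro h
      exact star_decomp_args hlm h ss rfl
    · exact starRW_app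
  · intro u v h1 h2 h3
    exact ML hlm h1 h2 h3
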